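/- Suppose the score function f(x) = max(η(x), 1−η(x)) satisfies f(x) ≥ 1/2 for all x and the random variable f(X) admits a density bounded by C > 0. Let A ⊆ X be measurable, let η̂ : X → [0,1] be measurable with sup_{x ∈ A} |η̂(x) − η(x)| ≤ ρ for some ρ ≥ 0, and let ĝ : X → {0,1} be a measurable classifier such that ĝ(x) = g*(x) for all x ∉ A and ĝ(x) = 1{η̂(x) ≥ 1/2} for all x ∈ A. Then R(ĝ) − R(g*) ≤ 4·C·ρ². -/

import Mathlib

open MeasureTheory

/-- Suppose the score function `f(x) = max(η(x), 1−η(x))`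
satisfies `f(x) ≥ 1/2` for all `x` and `f(X)` admits a density bounded by
`C > 0`.  Let `A` be measurable, let `η̂ : 𝒳 → [0,1]` be measurable with
`sup_{x ∈ A} |η̂(x) − η(x)| ≤ ρ` for some `ρ ≥ 0`, and let `ĝ` be a measurable
classifier with `ĝ(x) = g*(x)` off `A` and `ĝ(x) = 1{η̂(x) ≥ 1/2}` on `A`.
Then `R(ĝ) − R(g*) ≤ 4·C·ρ²`. -/
theorem excess_risk_bound_of_plugin_on_uncertain_region
    {Ω : Type*} [MeasurableSpace Ω] {μ : Measure Ω} [IsProbabilityMeasure μ]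
    {𝒳 : Type*} [MeasurableSpace 𝒳]
    (X : Ω → 𝒳) (Y : Ω → ℕ) (hX : Measurable X) (hY : Measurable Y)
    (hYrange : ∀ ω, Y ω = 0 ∨ Y ω = 1)
    (η : 𝒳 → ℝ) (hη : Measurable η) (hη01 : ∀ x, η x ∈ Set.Icc (0 : ℝ) 1)
    (hreg : μ[(fun ω => if Y ω = 1 then (1 : ℝ) else 0) |
        MeasurableSpace.comap X inferInstance] =ᵐ[μ] fun ω => η (X ω))
    (hf_half : ∀ x, (1 : ℝ)/2 ≤ max (η x) (1 - η x))
    (C : ℝ) (hC : 0 < C)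
    (hdens : ∃ p : ℝ → ENNReal, (∀ t, p t ≤ ENNReal.ofReal C) ∧
      Measure.map (fun ω => max (η (X ω)) (1 - η (X ω))) μ = volume.withDensity p)
    (A : Set 𝒳) (hA : MeasurableSet A)
    (ηhat : 𝒳 → ℝ) (hηhat : Measurable ηhat) (hηhat01 : ∀ x, ηhat x ∈ Set.Icc (0 : ℝ) 1)
    (ρ : ℝ) (hρ : 0 ≤ ρ) (hclose : ∀ x ∈ A, |ηhat x - η x| ≤ ρ)
    (ghat : 𝒳 → ℕ) (hghat : Measurable ghat)
    (hout : ∀ x ∉ A, ghat x = if η x ≥ 1/2 then 1 else 0)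
    (hin : ∀ x ∈ A, ghat x = if ηhat x ≥ 1/2 then 1 else 0) :
    (μ {ω | ghat (X ω) ≠ Y ω}).toReal
        - (μ {ω | (if η (X ω) ≥ 1/2 then (1 : ℕ) else 0) ≠ Y ω}).toReal
      ≤ 4 * C * ρ ^ 2 := by
  classical
  obtain ⟨p, hp, hmap⟩ := hdens
  set g : 𝒳 → ℕ := fun x => if η x ≥ 1/2 then 1 else 0 with hgdef
  set B₁ : Set 𝒳 := A ∩ {x | 1/2 ≤ η x ∧ ηhat x < 1/2} with hB₁def
  set B₀ : Set 𝒳 := A ∩ {x | η x < 1/2 ∧ 1/2 ≤ ηhat x} with hB₀def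
  have hB₁ : MeasurableSet B₁ :=
    hA.inter ((measurableSet_le measurable_const hη).inter
      (measurableSet_lt hηhat measurable_const))
  have hB₀ : MeasurableSet B₀ :=
    hA.inter ((measurableSet_lt hη measurable_const).inter
      (measurableSet_le measurable_const hηhat))
  set S₁ : Set Ω := X ⁻¹' B₁ with hS₁def
  set S₀ : Set Ω := X ⁻¹' B₀ with hS₀def
  have hS₁m : MeasurableSet S₁ := hX hB₁
  have hS₀m : MeasurableSet S₀ := hX hB₀
  have hY1m : MeasurableSet {ω | Y ω = 1} := hY (measurableSet_singleton 1)
  have hY0m : MeasurableSet {ω | Y ω = 0} := hY (measurableSet_singleton 0)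
  -- ghat equals g off B₁ ∪ B₀
  have hgg : ∀ x, x ∉ B₁ → x ∉ B₀ → ghat x = g x := by
    intro x h1 h0
    by_cases hxA : x ∈ A
    · rw [hin x hxA]
      by_cases he : (1:ℝ)/2 ≤ η x
      · by_cases hh : (1:ℝ)/2 ≤ ηhat x
        · show (if ηhat x ≥ 1/2 then 1 else 0) = if η x ≥ 1/2 then 1 else 0
          rw [if_pos hh, if_pos he]
        · exact absurd ⟨hxA, he, not_le.1 hh⟩ h1
      · by_cases hh : (1:ℝ)/2 ≤ ηhat x
        · exact absurd ⟨hxA, not_le.1 he, hh⟩ h0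
        · show (if ηhat x ≥ 1/2 then 1 else 0) = if η x ≥ 1/2 then 1 else 0
          rw [if_neg hh, if_neg he]
    · rw [hout x hxA]
  have hgh1 : ∀ x, x ∈ B₁ → ghat x = 0 := by
    intro x hx
    rw [hin x hx.1, if_neg (not_le.2 hx.2.2)]
  have hgh0 : ∀ x, x ∈ B₀ → ghat x = 1 := by
    intro x hx
    rw [hin x hx.1, if_pos hx.2.2]
  have hg1 : ∀ x, x ∈ B₁ → g x = 1 := by
    intro x hx; simp only [hgdef]; rw [if_pos hx.2.1]
  have hg0 : ∀ x, x ∈ B₀ → g x = 0 := by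
    intro x hx; simp only [hgdef]; rw [if_neg (not_le.2 hx.2.1)]
  -- disjointness
  have hdisjB : Disjoint S₁ S₀ := by
    rw [Set.disjoint_left]
    rintro ω ⟨_, h1, _⟩ ⟨_, h0, _⟩
    exact absurd h1 (not_le.2 h0)
  -- conditional expectation key identity
  have hm : MeasurableSpace.comap X inferInstance ≤ ‹MeasurableSpace Ω› := hX.comap_le
  have hZind : (fun ω => if Y ω = 1 then (1:ℝ) else 0)
      = Set.indicator {ω | Y ω = 1} (fun _ => (1:ℝ)) := by
    funext ω; simp [Set.indicator_apply]
  have hZint : Integrable (fun ω => if Y ω = 1 then (1:ℝ) else 0) μ := by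
    rw [hZind]; exact (integrable_const 1).indicator hY1m
  have key : ∀ t : Set 𝒳, MeasurableSet t →
      (μ ({ω | Y ω = 1} ∩ X ⁻¹' t)).toReal = ∫ ω in X ⁻¹' t, η (X ω) ∂μ := by
    intro t ht
    have h1 : ∫ ω in X ⁻¹' t, (if Y ω = 1 then (1:ℝ) else 0) ∂μ
        = ∫ ω in X ⁻¹' t, η (X ω) ∂μ := by
      rw [← setIntegral_condExp hm hZint ⟨t, ht, rfl⟩]
      exact integral_congr_ae (ae_restrict_of_ae hreg)
    have h2 : ∫ ω in X ⁻¹' t, (if Y ω = 1 then (1:ℝ) else 0) ∂μ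
        = (μ ({ω | Y ω = 1} ∩ X ⁻¹' t)).toReal := by
      rw [hZind, setIntegral_indicator hY1m, setIntegral_const, smul_eq_mul, mul_one,
        Set.inter_comm, measureReal_def]
    rw [← h2, h1]
  -- splitting by Y values
  have split : ∀ s : Set Ω, MeasurableSet s →
      (μ ({ω | Y ω = 0} ∩ s)).toReal
        = (μ s).toReal - (μ ({ω | Y ω = 1} ∩ s)).toReal := by
    intro s hs
    have hu : ({ω | Y ω = 1} ∩ s) ∪ ({ω | Y ω = 0} ∩ s) = s := by
      ext ω
      constructor
      · rintro (⟨_, h⟩ | ⟨_, h⟩) <;> exact h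
      · intro h
        rcases hYrange ω with h1 | h1
        · exact Or.inr ⟨h1, h⟩
        · exact Or.inl ⟨h1, h⟩
    have hd : Disjoint ({ω | Y ω = 1} ∩ s) ({ω | Y ω = 0} ∩ s) := by
      rw [Set.disjoint_left]
      rintro ω ⟨h1, _⟩ ⟨h0, _⟩
      simp only [Set.mem_setOf_eq] at h1 h0
      omega
    have hmu := measure_union (μ := μ) hd (hY0m.inter hs)
    rw [hu] at hmu
    rw [hmu, ENNReal.toReal_add (measure_ne_top μ _) (measure_ne_top μ _)]
    ring
  -- integrability of η ∘ X
  have hint : Integrable (fun ω => η (X ω)) μ := by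
    refine Integrable.mono' (integrable_const 1) (hη.comp hX).aestronglyMeasurable ?_
    filter_upwards with ω
    rw [Real.norm_of_nonneg (hη01 (X ω)).1]
    exact (hη01 (X ω)).2
  -- integral bounds
  have l1 : ∫ ω in S₁, η (X ω) ∂μ ≤ (1/2 + ρ) * (μ S₁).toReal := by
    have hb : ∀ ω ∈ S₁, η (X ω) ≤ 1/2 + ρ := by
      rintro ω ⟨hxA, h12, hh⟩
      have hc := hclose (X ω) hxA
      rw [abs_le] at hc
      linarith [hc.1]
    calc ∫ ω in S₁, η (X ω) ∂μ ≤ ∫ _ω in S₁, (1/2 + ρ) ∂μ :=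
          setIntegral_mono_on hint.integrableOn (integrableOn_const (measure_ne_top μ _) enorm_ne_top) hS₁m hb
      _ = (1/2 + ρ) * (μ S₁).toReal := by rw [setIntegral_const, smul_eq_mul, mul_comm, measureReal_def]
  have l0 : (1/2 - ρ) * (μ S₀).toReal ≤ ∫ ω in S₀, η (X ω) ∂μ := by
    have hb : ∀ ω ∈ S₀, 1/2 - ρ ≤ η (X ω) := by
      rintro ω ⟨hxA, h12, hh⟩
      have hc := hclose (X ω) hxA
      rw [abs_le] at hc
      linarith [hc.2]
    calc (1/2 - ρ) * (μ S₀).toReal = ∫ _ω in S₀, (1/2 - ρ) ∂μ := by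
          rw [setIntegral_const, smul_eq_mul, mul_comm, measureReal_def]
      _ ≤ ∫ ω in S₀, η (X ω) ∂μ :=
          setIntegral_mono_on (integrableOn_const (measure_ne_top μ _) enorm_ne_top)
            hint.integrableOn hS₀m hb
  -- set identities for error events
  have e1 : {ω | ghat (X ω) ≠ Y ω} ∩ S₁ = {ω | Y ω = 1} ∩ S₁ := by
    ext ω
    simp only [Set.mem_inter_iff, Set.mem_setOf_eq]
    refine and_congr_left fun hmem => ?_
    have h0 := hgh1 (X ω) hmem
    rcases hYrange ω with h | h <;> rw [h0] <;> omega
  have e0 : {ω | ghat (X ω) ≠ Y ω} ∩ S₀ = {ω | Y ω = 0} ∩ S₀ := by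
    ext ω
    simp only [Set.mem_inter_iff, Set.mem_setOf_eq]
    refine and_congr_left fun hmem => ?_
    have h0 := hgh0 (X ω) hmem
    rcases hYrange ω with h | h <;> rw [h0] <;> omega
  have f1 : {ω | g (X ω) ≠ Y ω} ∩ S₁ = {ω | Y ω = 0} ∩ S₁ := by
    ext ω
    simp only [Set.mem_inter_iff, Set.mem_setOf_eq]
    refine and_congr_left fun hmem => ?_
    have h0 := hg1 (X ω) hmem
    rcases hYrange ω with h | h <;> rw [h0] <;> omega
  have f0 : {ω | g (X ω) ≠ Y ω} ∩ S₀ = {ω | Y ω = 1} ∩ S₀ := by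
    ext ω
    simp only [Set.mem_inter_iff, Set.mem_setOf_eq]
    refine and_congr_left fun hmem => ?_
    have h0 := hg0 (X ω) hmem
    rcases hYrange ω with h | h <;> rw [h0] <;> omega
  -- reduce to the uncertain region
  set S : Set Ω := X ⁻¹' (B₁ ∪ B₀) with hSdef
  have hSeq : S = S₁ ∪ S₀ := by rw [hSdef, Set.preimage_union]
  have hSm : MeasurableSet S := hX (hB₁.union hB₀)
  have hdiffeq : {ω | ghat (X ω) ≠ Y ω} \ S = {ω | g (X ω) ≠ Y ω} \ S := by
    ext ω
    simp only [Set.mem_diff, Set.mem_setOf_eq, hSdef, Set.mem_preimage, Set.mem_union,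
      not_or]
    constructor
    · rintro ⟨hne, h1, h0⟩
      exact ⟨by rw [← hgg (X ω) h1 h0]; exact hne, h1, h0⟩
    · rintro ⟨hne, h1, h0⟩
      exact ⟨by rw [hgg (X ω) h1 h0]; exact hne, h1, h0⟩
  have hA1 := measure_inter_add_diff (μ := μ) {ω | ghat (X ω) ≠ Y ω} hSm
  have hA2 := measure_inter_add_diff (μ := μ) {ω | g (X ω) ≠ Y ω} hSm
  -- measure of the uncertain region is small
  have hfmeas : Measurable fun ω => max (η (X ω)) (1 - η (X ω)) :=
    (hη.comp hX).max (measurable_const.sub (hη.comp hX))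
  have hμS : (μ S).toReal ≤ C * ρ := by
    have hsub : S ⊆ (fun ω => max (η (X ω)) (1 - η (X ω))) ⁻¹' Set.Icc (1/2) (1/2 + ρ) := by
      intro ω hω
      rw [hSdef, Set.mem_preimage, Set.mem_union] at hω
      refine ⟨hf_half (X ω), ?_⟩
      rcases hω with ⟨hxA, h12, hh⟩ | ⟨hxA, h12, hh⟩ <;>
        (have hc := hclose (X ω) hxA; rw [abs_le] at hc;
          refine max_le (by linarith [hc.1, hc.2]) (by linarith [hc.1, hc.2]))
    have h1 : μ S ≤ ENNReal.ofReal (C * ρ) := by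
      calc μ S ≤ μ ((fun ω => max (η (X ω)) (1 - η (X ω))) ⁻¹' Set.Icc (1/2) (1/2 + ρ)) :=
            measure_mono hsub
        _ = (Measure.map (fun ω => max (η (X ω)) (1 - η (X ω))) μ) (Set.Icc (1/2) (1/2 + ρ)) :=
            (Measure.map_apply hfmeas measurableSet_Icc).symm
        _ = ∫⁻ t in Set.Icc (1/2) (1/2 + ρ), p t := by
            rw [hmap, withDensity_apply _ measurableSet_Icc]
        _ ≤ ∫⁻ _t in Set.Icc (1/2) (1/2 + ρ), ENNReal.ofReal C :=
            lintegral_mono fun t => hp t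
        _ = ENNReal.ofReal C * volume (Set.Icc (1/2) (1/2 + ρ)) := by
            rw [setLIntegral_const]
        _ = ENNReal.ofReal (C * ρ) := by
            rw [Real.volume_Icc, show (1:ℝ)/2 + ρ - 1/2 = ρ by ring,
              ← ENNReal.ofReal_mul hC.le]
    exact ENNReal.toReal_le_of_le_ofReal (by positivity) h1
  -- put everything together
  show (μ {ω | ghat (X ω) ≠ Y ω}).toReal - (μ {ω | g (X ω) ≠ Y ω}).toReal ≤ 4 * C * ρ ^ 2
  have hT1 : (μ {ω | ghat (X ω) ≠ Y ω}).toReal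
      = (μ ({ω | ghat (X ω) ≠ Y ω} ∩ S)).toReal
        + (μ ({ω | ghat (X ω) ≠ Y ω} \ S)).toReal := by
    rw [← ENNReal.toReal_add (measure_ne_top μ _) (measure_ne_top μ _), hA1]
  have hT2 : (μ {ω | g (X ω) ≠ Y ω}).toReal
      = (μ ({ω | g (X ω) ≠ Y ω} ∩ S)).toReal
        + (μ ({ω | g (X ω) ≠ Y ω} \ S)).toReal := by
    rw [← ENNReal.toReal_add (measure_ne_top μ _) (measure_ne_top μ _), hA2]
  have hU1 : (μ ({ω | ghat (X ω) ≠ Y ω} ∩ S)).toReal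
      = (μ ({ω | Y ω = 1} ∩ S₁)).toReal + (μ ({ω | Y ω = 0} ∩ S₀)).toReal := by
    rw [hSeq, Set.inter_union_distrib_left, e1, e0,
      measure_union (μ := μ) (hdisjB.mono Set.inter_subset_right Set.inter_subset_right)
        (hY0m.inter hS₀m),
      ENNReal.toReal_add (measure_ne_top μ _) (measure_ne_top μ _)]
  have hU2 : (μ ({ω | g (X ω) ≠ Y ω} ∩ S)).toReal
      = (μ ({ω | Y ω = 0} ∩ S₁)).toReal + (μ ({ω | Y ω = 1} ∩ S₀)).toReal := by
    rw [hSeq, Set.inter_union_distrib_left, f1, f0,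
      measure_union (μ := μ) (hdisjB.mono Set.inter_subset_right Set.inter_subset_right)
        (hY1m.inter hS₀m),
      ENNReal.toReal_add (measure_ne_top μ _) (measure_ne_top μ _)]
  have hμSsum : (μ S).toReal = (μ S₁).toReal + (μ S₀).toReal := by
    rw [hSeq, measure_union (μ := μ) hdisjB hS₀m,
      ENNReal.toReal_add (measure_ne_top μ _) (measure_ne_top μ _)]
  have k1 : (μ ({ω | Y ω = 1} ∩ S₁)).toReal = ∫ ω in S₁, η (X ω) ∂μ := key B₁ hB₁
  have k0 : (μ ({ω | Y ω = 1} ∩ S₀)).toReal = ∫ ω in S₀, η (X ω) ∂μ := key B₀ hB₀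
  have s1 := split S₁ hS₁m
  have s0 := split S₀ hS₀m
  have hμ1 : (0:ℝ) ≤ (μ S₁).toReal := ENNReal.toReal_nonneg
  have hμ0 : (0:ℝ) ≤ (μ S₀).toReal := ENNReal.toReal_nonneg
  rw [hT1, hT2, hdiffeq, hU1, hU2, s1, s0, k1, k0]
  nlinarith [hμS, hμSsum, l1, l0, hμ1, hμ0, mul_nonneg hC.le (mul_nonneg hρ hρ)]
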